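/- arXiv:2201.07855 — 4 statements merged into one kernel-verified Lean document; each statement's English description precedes it below -/
import Mathlib

section
/- Suppose service rates are decomposable with all pairs being activities, I ≥ 2 and K ≥ 2, and let ξ* be the allocation ξ*_{(i,k)} = λ_i/α_i, which satisfies R ξ* = λ and G ξ* = 1_K. Define δ ∈ ℝ^{I·K} by δ_{(i,k)} = (−1)^{i+k}/β_k if i ≤ 2 and k ≤ 2, and δ_{(i,k)} = 0 otherwise. Then R δ = 0 and G δ = 0, and consequently for sufficiently small ε > 0, ξ* + ε δ is a distinct nonnegative solution of R ξ = λ, G ξ = 1_K: the linear program has multiple solutions. -/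
lemma sum_two_aux {K : ℕ} (hK : 2 ≤ K) (g : Fin K → ℝ) :
    ∑ k : Fin K, (if k.val < 2 then g k else 0) =
      g ⟨0, by omega⟩ + g ⟨1, by omega⟩ := by
  rw [← Finset.sum_filter]
  have h : (Finset.univ.filter (fun k : Fin K => k.val < 2)) =
      {(⟨0, by omega⟩ : Fin K), ⟨1, by omega⟩} := by
    ext k
    simp [Fin.ext_iff]
    omega
  rw [h, Finset.sum_pair (by simp [Fin.ext_iff])]

/-- Under decomposability with all pairs being activities, the perturbation δ satisfies
R δ = 0 and G δ = 0, so ξ* + ε δ is a distinct nonnegative solution for small ε > 0: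
the LP has multiple solutions. -/
theorem stmt_3 {I K : ℕ} (hI : 2 ≤ I) (hK : 2 ≤ K)
    (α : Fin I → ℝ) (β : Fin K → ℝ) (lam : Fin I → ℝ)
    (hα : ∀ i, 0 < α i) (hβ : ∀ k, 0 < β k) (hlam : ∀ i, 0 < lam i)
    (hβsum : ∑ k, β k = 1) (hnorm : ∑ i, lam i / α i = 1)
    (ξstar : Fin I × Fin K → ℝ)
    (hξstar : ∀ p, ξstar p = lam p.1 / α p.1)
    (hRξ : ∀ i, ∑ k, α i * β k * ξstar (i, k) = lam i)
    (hGξ : ∀ k, ∑ i, ξstar (i, k) = 1)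
    (δ : Fin I × Fin K → ℝ)
    (hδ : ∀ p : Fin I × Fin K,
      δ p = if p.1.val < 2 ∧ p.2.val < 2 then (-1 : ℝ) ^ (p.1.val + p.2.val) / β p.2 else 0) :
    (∀ i, ∑ k, α i * β k * δ (i, k) = 0) ∧
    (∀ k, ∑ i, δ (i, k) = 0) ∧
    (∃ ε : ℝ, 0 < ε ∧
      (fun p => ξstar p + ε * δ p) ≠ ξstar ∧
      (∀ p, 0 ≤ ξstar p + ε * δ p) ∧
      (∀ i, ∑ k, α i * β k * (ξstar (i, k) + ε * δ (i, k)) = lam i) ∧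
      (∀ k, ∑ i, (ξstar (i, k) + ε * δ (i, k)) = 1)) := by
  have hR : ∀ i, ∑ k, α i * β k * δ (i, k) = 0 := by
    intro i
    have : ∀ k : Fin K, α i * β k * δ (i, k) =
        (if k.val < 2 then (if i.val < 2 then α i * (-1 : ℝ) ^ (i.val + k.val) else 0) else 0) := by
      intro k
      rw [hδ]
      by_cases h1 : i.val < 2 <;> by_cases h2 : k.val < 2 <;>
        simp [h1, h2]
      field_simp [(hβ k).ne']
    rw [Finset.sum_congr rfl (fun k _ => this k), sum_two_aux hK]
    by_cases h1 : i.val < 2 <;> simp [h1, pow_succ]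
  have hG : ∀ k, ∑ i, δ (i, k) = 0 := by
    intro k
    have : ∀ i : Fin I, δ (i, k) =
        (if i.val < 2 then (if k.val < 2 then (-1 : ℝ) ^ (i.val + k.val) / β k else 0) else 0) := by
      intro i
      rw [hδ]
      by_cases h1 : i.val < 2 <;> by_cases h2 : k.val < 2 <;> simp [h1, h2]
    rw [Finset.sum_congr rfl (fun i _ => this i), sum_two_aux hI]
    by_cases h2 : k.val < 2 <;> simp [h2, pow_succ]
    ring
  refine ⟨hR, hG, ?_⟩
  have hξpos : ∀ p, 0 < ξstar p := fun p => by
    rw [hξstar]; exact div_pos (hlam p.1) (hα p.1)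
  have : Nonempty (Fin I × Fin K) := ⟨(⟨0, by omega⟩, ⟨0, by omega⟩)⟩
  have hne : (Finset.univ : Finset (Fin I × Fin K)).Nonempty := Finset.univ_nonempty
  set ε := Finset.univ.inf' hne (fun p : Fin I × Fin K => ξstar p / (1 + |δ p|)) with hε
  have hεpos : 0 < ε := by
    apply Finset.lt_inf'_iff hne |>.mpr
    intro p _
    have := hξpos p
    have : 0 ≤ |δ p| := abs_nonneg _
    positivity
  have hεle : ∀ p, ε * |δ p| ≤ ξstar p := by
    intro p
    have h1 : ε ≤ ξstar p / (1 + |δ p|) :=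
      Finset.inf'_le _ (Finset.mem_univ p)
    have hd : 0 ≤ |δ p| := abs_nonneg _
    have hpos : (0:ℝ) < 1 + |δ p| := by linarith
    calc ε * |δ p| ≤ (ξstar p / (1 + |δ p|)) * |δ p| := by
          apply mul_le_mul_of_nonneg_right h1 hd
      _ ≤ ξstar p := by
          rw [div_mul_eq_mul_div, div_le_iff₀ hpos]
          have := hξpos p
          nlinarith
  refine ⟨ε, hεpos, ?_, ?_, ?_, ?_⟩
  · intro h
    have := congrFun h ((⟨0, by omega⟩ : Fin I), (⟨0, by omega⟩ : Fin K))
    have hδ0 : δ ((⟨0, by omega⟩ : Fin I), (⟨0, by omega⟩ : Fin K)) = 1 / β ⟨0, by omega⟩ := by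
      rw [hδ]; simp
    have hb := hβ (⟨0, by omega⟩ : Fin K)
    rw [hδ0] at this
    have : ε * (1 / β ⟨0, by omega⟩) = 0 := by linarith
    have : ε * (1 / β ⟨0, by omega⟩) > 0 := by positivity
    linarith
  · intro p
    have h := hεle p
    have h2 : -(ε * δ p) ≤ ε * |δ p| := by
      rw [← abs_neg (δ p)] at *
      calc -(ε * δ p) = ε * (-(δ p)) := by ring
        _ ≤ ε * |(-(δ p))| := by
            apply mul_le_mul_of_nonneg_left (le_abs_self _) hεpos.le
    linarith
  · intro i
    have : ∀ k : Fin K, α i * β k * (ξstar (i, k) + ε * δ (i, k)) =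
        α i * β k * ξstar (i, k) + ε * (α i * β k * δ (i, k)) := fun k => by ring
    rw [Finset.sum_congr rfl (fun k _ => this k), Finset.sum_add_distrib,
      ← Finset.mul_sum, hR i, hRξ i, mul_zero, add_zero]
  · intro k
    have : ∀ i : Fin I, ξstar (i, k) + ε * δ (i, k) =
        ξstar (i, k) + ε * δ (i, k) := fun i => rfl
    rw [Finset.sum_add_distrib, ← Finset.mul_sum, hG k, hGξ k, mul_zero, add_zero]
end

section
/- For a 2-class, 2-server system with all four activities, if there exist two distinct nonnegative solutions ξ^(1), ξ^(2) to R ξ = λ with (G ξ^(p))_k = 1 for both servers k and p = 1,2, then the service rates are decomposable, i.e., μ_{11}/μ_{12} = μ_{21}/μ_{22} (equivalently (μ_{21}, μ_{22}) = c (μ_{11}, μ_{12}) for some c > 0). -/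
/-- In a 2-class 2-server system with all four activities, existence of two distinct
fully loaded feasible allocations forces decomposability of the service rates. -/
theorem stmt_4 (μ : Fin 2 → Fin 2 → ℝ) (lam : Fin 2 → ℝ)
    (hμ : ∀ i k, 0 < μ i k) (hlam : ∀ i, 0 < lam i)
    (ξ₁ ξ₂ : Fin 2 → Fin 2 → ℝ)
    (hξ₁0 : ∀ i k, 0 ≤ ξ₁ i k) (hξ₂0 : ∀ i k, 0 ≤ ξ₂ i k)
    (hR₁ : ∀ i, μ i 0 * ξ₁ i 0 + μ i 1 * ξ₁ i 1 = lam i)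
    (hR₂ : ∀ i, μ i 0 * ξ₂ i 0 + μ i 1 * ξ₂ i 1 = lam i)
    (hG₁ : ∀ k, ξ₁ 0 k + ξ₁ 1 k = 1)
    (hG₂ : ∀ k, ξ₂ 0 k + ξ₂ 1 k = 1)
    (hne : ξ₁ ≠ ξ₂) :
    μ 0 0 / μ 0 1 = μ 1 0 / μ 1 1 ∧
      ∃ c : ℝ, 0 < c ∧ μ 1 0 = c * μ 0 0 ∧ μ 1 1 = c * μ 0 1 := by
  set a := ξ₁ 0 0 - ξ₂ 0 0 with ha
  set b := ξ₁ 0 1 - ξ₂ 0 1 with hb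
  have e0 : μ 0 0 * a + μ 0 1 * b = 0 := by
    have h1 := hR₁ 0; have h2 := hR₂ 0; simp only [ha, hb]; ring_nf; linarith
  have e1 : μ 1 0 * a + μ 1 1 * b = 0 := by
    have h1 := hR₁ 1; have h2 := hR₂ 1
    have g0 : ξ₁ 1 0 - ξ₂ 1 0 = -a := by
      have := hG₁ 0; have := hG₂ 0; simp only [ha]; linarith
    have g1 : ξ₁ 1 1 - ξ₂ 1 1 = -b := by
      have := hG₁ 1; have := hG₂ 1; simp only [hb]; linarith
    linear_combination -(h1 - h2) + μ 1 0 * g0 + μ 1 1 * g1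
  have hane : a ≠ 0 := by
    intro h0
    have hb0 : b = 0 := by
      have := (hμ 0 1).ne'
      have : μ 0 1 * b = 0 := by rw [h0] at e0; linarith
      exact (mul_eq_zero.mp this).resolve_left (hμ 0 1).ne'
    apply hne
    funext i k
    have g0 : ξ₁ 1 0 = ξ₂ 1 0 := by
      have := hG₁ 0; have := hG₂ 0; simp only [ha] at h0; linarith
    have g1 : ξ₁ 1 1 = ξ₂ 1 1 := by
      have := hG₁ 1; have := hG₂ 1; simp only [hb] at hb0; linarith
    simp only [ha] at h0; simp only [hb] at hb0
    fin_cases i <;> fin_cases k <;> simp_all <;> linarith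
  have key : μ 0 0 * μ 1 1 = μ 1 0 * μ 0 1 := by
    have : (μ 0 0 * μ 1 1 - μ 1 0 * μ 0 1) * a = 0 := by linear_combination μ 1 1 * e0 - μ 0 1 * e1
    have := mul_eq_zero.mp this
    rcases this with h | h
    · linarith
    · exact absurd h hane
  have h01 : μ 0 1 ≠ 0 := (hμ 0 1).ne'
  have h11 : μ 1 1 ≠ 0 := (hμ 1 1).ne'
  refine ⟨by field_simp; linarith [key], μ 1 1 / μ 0 1, div_pos (hμ 1 1) (hμ 0 1), ?_, ?_⟩
  · field_simp; nlinarith [key]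
  · field_simp
end

section
/- The Skorokhod map on the half line satisfies the minimality property: if ψ ∈ D_ℝ[0,∞), η is a nonnegative nondecreasing càdlàg function, and φ = ψ + η satisfies φ(t) ≥ 0 for all t, then φ(t) ≥ Γ₁[ψ](t) for all t, where Γ₁[ψ](t) = ψ(t) + sup_{0 ≤ s ≤ t} ψ(s)⁻. -/
/-- Minimality of the Skorokhod map on the half line: if φ = ψ + η ≥ 0 with η
nonnegative nondecreasing (and ψ, η càdlàg), then φ(t) ≥ Γ₁[ψ](t) for all t ≥ 0. -/
theorem stmt_12 (ψ η : ℝ → ℝ)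
    (hψrc : ∀ t, ContinuousWithinAt ψ (Set.Ici t) t)
    (hηrc : ∀ t, ContinuousWithinAt η (Set.Ici t) t)
    (hη0 : ∀ t, 0 ≤ t → 0 ≤ η t)
    (hηmono : ∀ s t, 0 ≤ s → s ≤ t → η s ≤ η t)
    (hφ : ∀ t, 0 ≤ t → 0 ≤ ψ t + η t) :
    ∀ t, 0 ≤ t →
      ψ t + sSup ((fun s => max (-ψ s) 0) '' Set.Icc 0 t) ≤ ψ t + η t := by
  intro t ht
  have h : sSup ((fun s => max (-ψ s) 0) '' Set.Icc 0 t) ≤ η t := by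
    apply csSup_le ((Set.nonempty_Icc.2 ht).image _)
    rintro x ⟨s, ⟨hs0, hst⟩, rfl⟩
    have h1 : -ψ s ≤ η t := by
      have := hφ s hs0
      have := hηmono s t hs0 hst
      linarith
    exact max_le h1 (hη0 t ht)
  linarith
end

section
/- Let Z, Z̃ be reflections of z + K and K respectively through the Skorokhod map on the half line, where K ∈ C_ℝ[0,∞) with K(0)=0 and z ≥ 0: (Z, L) = Γ[z + K], (Z̃, L̃) = Γ[K]. Then 0 ≤ Z(t) − Z̃(t) ≤ z for all t, and Z(t) = Z̃(t) for all t ≥ τ, where τ = inf{t : K(t) = −z}. -/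
/-- Comparison of Skorokhod reflections of z + K and K: 0 ≤ Z − Z̃ ≤ z everywhere on
[0,∞), and Z = Z̃ from the first time K hits −z onwards. -/
theorem stmt_18 (K : ℝ → ℝ) (hK : Continuous K) (hK0 : K 0 = 0)
    (z : ℝ) (hz : 0 ≤ z)
    (Z Zt L Lt : ℝ → ℝ)
    (hL : ∀ t, L t = sSup ((fun s => max (-(z + K s)) 0) '' Set.Icc 0 t))
    (hLt : ∀ t, Lt t = sSup ((fun s => max (-K s) 0) '' Set.Icc 0 t))
    (hZ : ∀ t, Z t = z + K t + L t)
    (hZt : ∀ t, Zt t = K t + Lt t) :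
    (∀ t, 0 ≤ t → 0 ≤ Z t - Zt t ∧ Z t - Zt t ≤ z) ∧
    (∀ r t, 0 ≤ r → K r = -z → r ≤ t → Z t = Zt t) := by
  have hfc : Continuous fun s => max (-(z + K s)) 0 := by fun_prop
  have hgc : Continuous fun s => max (-K s) 0 := by fun_prop
  have hbf : ∀ t : ℝ, BddAbove ((fun s => max (-(z + K s)) 0) '' Set.Icc 0 t) :=
    fun t => (isCompact_Icc.image hfc).bddAbove
  have hbg : ∀ t : ℝ, BddAbove ((fun s => max (-K s) 0) '' Set.Icc 0 t) :=
    fun t => (isCompact_Icc.image hgc).bddAbove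
  have hne : ∀ t : ℝ, 0 ≤ t → (Set.Icc (0:ℝ) t).Nonempty :=
    fun t ht => ⟨0, by simp [ht]⟩
  -- L t ≤ Lt t
  have key1 : ∀ t, 0 ≤ t →
      sSup ((fun s => max (-(z + K s)) 0) '' Set.Icc 0 t)
        ≤ sSup ((fun s => max (-K s) 0) '' Set.Icc 0 t) := by
    intro t ht
    apply csSup_le ((hne t ht).image _)
    rintro x ⟨s, hs, rfl⟩
    have h1 : max (-(z + K s)) 0 ≤ max (-K s) 0 :=
      max_le (by linarith [le_max_left (-K s) 0]) (le_max_right _ _)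
    exact h1.trans (le_csSup (hbg t) ⟨s, hs, rfl⟩)
  -- Lt t ≤ L t + z
  have key2 : ∀ t, 0 ≤ t →
      sSup ((fun s => max (-K s) 0) '' Set.Icc 0 t)
        ≤ sSup ((fun s => max (-(z + K s)) 0) '' Set.Icc 0 t) + z := by
    intro t ht
    apply csSup_le ((hne t ht).image _)
    rintro x ⟨s, hs, rfl⟩
    have hfs : -(z + K s) ≤ max (-(z + K s)) 0 := le_max_left _ _
    have hfs0 : (0:ℝ) ≤ max (-(z + K s)) 0 := le_max_right _ _
    have h1 : max (-K s) 0 ≤ max (-(z + K s)) 0 + z :=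
      max_le (by linarith) (by linarith)
    have h2 := le_csSup (hbf t) (⟨s, hs, rfl⟩ :
      max (-(z + K s)) 0 ∈ (fun s => max (-(z + K s)) 0) '' Set.Icc 0 t)
    linarith
  constructor
  · intro t ht
    have h1 := key1 t ht
    have h2 := key2 t ht
    rw [hZ t, hZt t, hL t, hLt t]
    constructor <;> linarith
  · intro r t hr hKr hrt
    have ht : (0:ℝ) ≤ t := hr.trans hrt
    have hrm : r ∈ Set.Icc (0:ℝ) t := ⟨hr, hrt⟩
    have hgr : max (-K r) 0 = z := by rw [hKr]; simp [hz]
    have hzle : z ≤ sSup ((fun s => max (-K s) 0) '' Set.Icc 0 t) := by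
      rw [← hgr]; exact le_csSup (hbg t) ⟨r, hrm, rfl⟩
    -- L t + z ≤ Lt t
    have key3 : sSup ((fun s => max (-(z + K s)) 0) '' Set.Icc 0 t)
        ≤ sSup ((fun s => max (-K s) 0) '' Set.Icc 0 t) - z := by
      apply csSup_le ((hne t ht).image _)
      rintro x ⟨s, hs, rfl⟩
      dsimp only
      rcases le_or_gt (-(z + K s)) 0 with h | h
      · rw [max_eq_right h]; linarith
      · rw [max_eq_left h.le]
        have : -K s ≤ max (-K s) 0 := le_max_left _ _
        have h2 := le_csSup (hbg t) (⟨s, hs, rfl⟩ :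
          max (-K s) 0 ∈ (fun s => max (-K s) 0) '' Set.Icc 0 t)
        linarith
    have h2 := key2 t ht
    rw [hZ t, hZt t, hL t, hLt t]
    linarith
end
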